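/- arXiv:1708.00528 — 6 statements merged into one kernel-verified Lean document; each statement's English description precedes it below -/
import Mathlib

section
/- Let κ be a regular uncountable cardinal and let T and U be normal κ-trees. If there exists a cofinal set A ⊆ κ such that the restricted trees T↾A and U↾A are isomorphic, then T and U are club isomorphic, i.e., there is a club C ⊆ κ such that T↾C and U↾C are isomorphic. Moreover, C can be taken to be A together with its limit points, and the isomorphism on T↾C extends the given isomorphism on T↾A. -/
universe u

/-- A set-theoretic tree: a strict partial order in which the set of predecessors
of any node is well-ordered. -/
structure STree (α : Type u) where
  lt : α → α → Prop
  irrefl : ∀ x, ¬ lt x x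
  trans : ∀ {x y z}, lt x y → lt y z → lt x z
  wo : ∀ x : α, IsWellOrder {y // lt y x} (fun a b => lt a.1 b.1)

namespace STree

variable {α β : Type u}

/-- The height of a node: the order type of its set of predecessors. -/
noncomputable def ht (T : STree α) (x : α) : Ordinal :=
  @Ordinal.type {y // T.lt y x} (fun a b => T.lt a.1 b.1) (T.wo x)

/-- The reflexive closure of the tree order. -/
def le (T : STree α) (x y : α) : Prop := T.lt x y ∨ x = y

/-- `T` is a `κ`-tree: height `κ` and all levels of size `< κ`. -/
def IsKTree (T : STree α) (κ : Cardinal) : Prop :=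
  (∀ x, T.ht x < κ.ord) ∧ (∀ γ < κ.ord, ∃ x, T.ht x = γ) ∧
    ∀ γ : Ordinal, Cardinal.mk {x // T.ht x = γ} < κ

/-- `T` is a normal `κ`-tree. -/
def IsNormalTree (T : STree α) (κ : Cardinal) : Prop :=
  (∀ x, ∀ γ, T.ht x < γ → γ < κ.ord → ∃ y, T.lt x y ∧ T.ht y = γ) ∧
  (∀ x y, x ≠ y → T.ht x = T.ht y → Order.IsSuccLimit (T.ht x) →
    ∃ z, T.lt z x ∧ ¬ T.lt z y) ∧
  (∀ x, ∃ y z, T.lt x y ∧ T.lt x z ∧ ¬ T.le y z ∧ ¬ T.le z y)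

/-- A chain in `T`: a linearly ordered subset. -/
def IsChain (T : STree α) (b : Set α) : Prop :=
  ∀ x ∈ b, ∀ y ∈ b, T.le x y ∨ T.le y x

/-- `T` is countably closed: every countable chain has an upper bound. -/
def CClosed (T : STree α) : Prop :=
  ∀ b : Set α, b.Countable → T.IsChain b → ∃ z, ∀ x ∈ b, T.le x z

/-- `T` is a `κ`-Aronszajn tree: a `κ`-tree with no cofinal chain. -/
def Aronszajn (T : STree α) (κ : Cardinal) : Prop :=
  T.IsKTree κ ∧ ¬ ∃ b : Set α, T.IsChain b ∧ ∀ γ < κ.ord, ∃ x ∈ b, T.ht x = γ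

end STree

/-- `C` is club in `κo`: a subset of `κo` which is unbounded and closed. -/
def ClubIn (C : Set Ordinal) (κo : Ordinal) : Prop :=
  C ⊆ Set.Iio κo ∧ (∀ γ < κo, ∃ δ ∈ C, γ ≤ δ) ∧
    ∀ δ : Ordinal, δ < κo → δ ≠ 0 → (∀ γ < δ, ∃ b ∈ C, γ < b ∧ b < δ) → δ ∈ C

/-- The limit points (below `κo`) of a set of ordinals. -/
def limPts (A : Set Ordinal) (κo : Ordinal) : Set Ordinal :=
  {δ | δ < κo ∧ δ ≠ 0 ∧ ∀ γ < δ, ∃ b ∈ A, γ < b ∧ b < δ}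

section Aux

variable {α β : Type u}

lemma ht_typein (T : STree α) {x y : α} (h : T.lt y x) :
    T.ht y = @Ordinal.typein {z // T.lt z x} (fun a b => T.lt a.1 b.1) (T.wo x) ⟨y, h⟩ := by
  letI := T.wo x
  letI := T.wo y
  rw [← Ordinal.type_subrel]
  exact Ordinal.type_eq.mpr ⟨RelIso.mk
    (Equiv.mk (fun z => ⟨⟨z.1, T.trans z.2 h⟩, z.2⟩) (fun b => ⟨b.1.1, b.2⟩)
      (fun z => rfl) (fun b => rfl)) (fun {a b} => Iff.rfl)⟩

lemma ht_lt (T : STree α) {x y : α} (h : T.lt y x) : T.ht y < T.ht x := by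
  letI := T.wo x
  rw [ht_typein T h]
  exact Ordinal.typein_lt_type _ _

lemma lt_of_ht_lt (T : STree α) {x y z : α} (hy : T.lt y x) (hz : T.lt z x)
    (h : T.ht y < T.ht z) : T.lt y z := by
  letI := T.wo x
  rw [ht_typein T hy, ht_typein T hz] at h
  exact (Ordinal.typein_lt_typein (fun a b : {w // T.lt w x} => T.lt a.1 b.1)).mp h

lemma eq_of_ht_eq (T : STree α) {x y z : α} (hy : T.lt y x) (hz : T.lt z x)
    (h : T.ht y = T.ht z) : y = z := by
  letI := T.wo x
  rw [ht_typein T hy, ht_typein T hz] at h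
  have := Ordinal.typein_injective (fun a b : {w // T.lt w x} => T.lt a.1 b.1) h
  exact congrArg Subtype.val this

lemma exists_pred (T : STree α) {x : α} {γ : Ordinal} (h : γ < T.ht x) :
    ∃ y, T.lt y x ∧ T.ht y = γ := by
  letI := T.wo x
  have h' : γ < Ordinal.type (fun a b : {y // T.lt y x} => T.lt a.1 b.1) := h
  obtain ⟨a, ha⟩ := Ordinal.typein_surj _ h'
  exact ⟨a.1, a.2, by rw [ht_typein T a.2]; simpa using ha⟩

variable {κ : Cardinal} {T : STree α} {U : STree β} {A : Set Ordinal}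

lemma ht_e (e : {x : α // T.ht x ∈ A} ≃ {y : β // U.ht y ∈ A})
    (he : ∀ a b, T.lt a.1 b.1 ↔ U.lt (e a).1 (e b).1)
    (a : {x : α // T.ht x ∈ A}) : U.ht (e a).1 = T.ht a.1 := by
  suffices H : ∀ o : Ordinal, ∀ a : {x : α // T.ht x ∈ A}, T.ht a.1 = o → U.ht (e a).1 = o from
    H _ a rfl
  intro o
  induction o using Ordinal.induction with
  | h o IH =>
    intro a ha
    have key : ∀ β' : Ordinal, (β' ∈ A ∧ β' < o) ↔ (β' ∈ A ∧ β' < U.ht (e a).1) := by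
      intro β'
      constructor
      · rintro ⟨hβA, hβo⟩
        obtain ⟨p, hpx, hpβ⟩ := exists_pred T (x := a.1) (ha ▸ hβo)
        have hpA : T.ht p ∈ A := hpβ ▸ hβA
        have h1 : U.lt (e ⟨p, hpA⟩).1 (e a).1 := (he ⟨p, hpA⟩ a).mp hpx
        have h2 : U.ht (e ⟨p, hpA⟩).1 = β' := IH β' hβo ⟨p, hpA⟩ hpβ
        exact ⟨hβA, h2 ▸ ht_lt U h1⟩
      · rintro ⟨hβA, hβ'⟩
        obtain ⟨q, hq, hqβ⟩ := exists_pred U hβ'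
        have hqA : U.ht q ∈ A := hqβ ▸ hβA
        set b := e.symm ⟨q, hqA⟩ with hb
        have hbq : e b = ⟨q, hqA⟩ := e.apply_symm_apply _
        have hlt : T.lt b.1 a.1 := (he b a).mpr (by rw [hbq]; exact hq)
        have hbo : T.ht b.1 < o := ha ▸ ht_lt T hlt
        have := IH (T.ht b.1) hbo b rfl
        rw [hbq] at this
        exact ⟨hβA, by rw [← hqβ, this]; exact hbo⟩
    rcases lt_trichotomy o (U.ht (e a).1) with h | h | h
    · have := (key o).mpr ⟨ha ▸ a.2, h⟩
      exact absurd this.2 (lt_irrefl o)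
    · exact h.symm
    · have := (key (U.ht (e a).1)).mp ⟨(e a).2, h⟩
      exact absurd this.2 (lt_irrefl _)

def TRel (T : STree α) (U : STree β) (A : Set Ordinal)
    (e : {x : α // T.ht x ∈ A} ≃ {y : β // U.ht y ∈ A}) (x : α) (y : β) : Prop :=
  U.ht y = T.ht x ∧ ∀ p (hp : T.lt p x) (hA : T.ht p ∈ A), U.lt (e ⟨p, hA⟩).1 y

lemma limPts_lim {δ κo : Ordinal} (h : δ ∈ limPts A κo) : Order.IsSuccLimit δ := by
  refine Ordinal.isSuccLimit_iff.mpr ⟨h.2.1, Order.isSuccPrelimit_of_succ_lt fun a ha => ?_⟩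
  obtain ⟨b, _, hab, hbδ⟩ := h.2.2 a ha
  exact lt_of_le_of_lt (Order.succ_le_of_lt hab) hbδ

lemma uq (hUn : U.IsNormalTree κ) {δ : Ordinal} {y y' : β} (hδ : δ ∈ limPts A κ.ord)
    (hy : U.ht y = δ) (hy' : U.ht y' = δ)
    (hsub : ∀ q, U.lt q y → U.ht q ∈ A → U.lt q y') : y = y' := by
  by_contra hne
  obtain ⟨z, hzy, hzy'⟩ := hUn.2.1 y y' hne (hy.trans hy'.symm) (hy ▸ limPts_lim hδ)
  have hz : U.ht z < δ := hy ▸ ht_lt U hzy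
  obtain ⟨b, hbA, h1, h2⟩ := hδ.2.2 _ hz
  obtain ⟨q, hq, hqb⟩ := exists_pred U (x := y) (show b < U.ht y from hy ▸ h2)
  have hzq : U.lt z q := lt_of_ht_lt U hzy hq (by rw [hqb]; exact h1)
  exact hzy' (U.trans hzq (hsub q hq (hqb ▸ hbA)))

lemma rel_unique (hUn : U.IsNormalTree κ)
    {e : {x : α // T.ht x ∈ A} ≃ {y : β // U.ht y ∈ A}}
    (he : ∀ a b, T.lt a.1 b.1 ↔ U.lt (e a).1 (e b).1)
    {x : α} {y y' : β} (hx : T.ht x ∈ limPts A κ.ord)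
    (h1 : TRel T U A e x y) (h2 : TRel T U A e x y') : y = y' := by
  apply uq (A := A) hUn hx h1.1 h2.1
  intro q hq hqA
  have hβ : U.ht q < T.ht x := h1.1 ▸ ht_lt U hq
  obtain ⟨p, hpx, hpβ⟩ := exists_pred T hβ
  have hpA : T.ht p ∈ A := hpβ ▸ hqA
  have h1p := h1.2 p hpx hpA
  have hq' : (e ⟨p, hpA⟩).1 = q := eq_of_ht_eq U h1p hq (by rw [ht_e e he, hpβ])
  exact hq' ▸ h2.2 p hpx hpA

lemma rel_exists (hTn : T.IsNormalTree κ) (hA : A ⊆ Set.Iio κ.ord)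
    (hAcof : ∀ γ < κ.ord, ∃ δ ∈ A, γ ≤ δ)
    {e : {x : α // T.ht x ∈ A} ≃ {y : β // U.ht y ∈ A}}
    (he : ∀ a b, T.lt a.1 b.1 ↔ U.lt (e a).1 (e b).1)
    {x : α} (hx : T.ht x ∈ limPts A κ.ord) (hxA : T.ht x ∉ A) :
    ∃ y, TRel T U A e x y := by
  obtain ⟨a0, ha0A, hle⟩ := hAcof _ hx.1
  have hlt : T.ht x < a0 := lt_of_le_of_ne hle (fun h => hxA (h ▸ ha0A))
  obtain ⟨x', hxx', hx'⟩ := hTn.1 x a0 hlt (hA ha0A)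
  have hx'A : T.ht x' ∈ A := hx' ▸ ha0A
  have hy0 : U.ht (e ⟨x', hx'A⟩).1 = a0 := by rw [ht_e e he]; exact hx'
  obtain ⟨y, hyy0, hyht⟩ := exists_pred U (show T.ht x < U.ht (e ⟨x', hx'A⟩).1 from hy0 ▸ hlt)
  refine ⟨y, hyht, fun p hp hpA => ?_⟩
  have h1 : U.lt (e ⟨p, hpA⟩).1 (e ⟨x', hx'A⟩).1 := (he ⟨p, hpA⟩ ⟨x', hx'A⟩).mp (T.trans hp hxx')
  exact lt_of_ht_lt U h1 hyy0 (by rw [ht_e e he, hyht]; exact ht_lt T hp)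

open Classical in
noncomputable def gfun (T : STree α) (U : STree β) (A : Set Ordinal) (κo : Ordinal)
    (e : {x : α // T.ht x ∈ A} ≃ {y : β // U.ht y ∈ A})
    (hEX : ∀ x, T.ht x ∈ limPts A κo → T.ht x ∉ A → ∃ y, TRel T U A e x y)
    (x : α) (hx : T.ht x ∈ A ∪ limPts A κo) : β :=
  if h : T.ht x ∈ A then (e ⟨x, h⟩).1 else (hEX x (hx.resolve_left h) h).choose

lemma gfun_pos {e : {x : α // T.ht x ∈ A} ≃ {y : β // U.ht y ∈ A}} {κo : Ordinal}
    {hEX : ∀ x, T.ht x ∈ limPts A κo → T.ht x ∉ A → ∃ y, TRel T U A e x y}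
    {x : α} (hx : T.ht x ∈ A ∪ limPts A κo) (h : T.ht x ∈ A) :
    gfun T U A κo e hEX x hx = (e ⟨x, h⟩).1 := by
  unfold gfun
  exact dif_pos h

variable {e : {x : α // T.ht x ∈ A} ≃ {y : β // U.ht y ∈ A}} {κo : Ordinal}
  {hEX : ∀ x, T.ht x ∈ limPts A κo → T.ht x ∉ A → ∃ y, TRel T U A e x y}

lemma gfun_rel (he : ∀ a b, T.lt a.1 b.1 ↔ U.lt (e a).1 (e b).1)
    (x : α) (hx : T.ht x ∈ A ∪ limPts A κo) :
    TRel T U A e x (gfun T U A κo e hEX x hx) := by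
  unfold gfun
  split
  · next h => exact ⟨ht_e e he _, fun p hp hpA => (he ⟨p, hpA⟩ ⟨x, h⟩).mp hp⟩
  · next h => exact (hEX x (hx.resolve_left h) h).choose_spec

lemma gfun_ht (he : ∀ a b, T.lt a.1 b.1 ↔ U.lt (e a).1 (e b).1)
    (x : α) (hx : T.ht x ∈ A ∪ limPts A κo) :
    U.ht (gfun T U A κo e hEX x hx) = T.ht x :=
  (gfun_rel he x hx).1

lemma gfun_mono (hUn : U.IsNormalTree κ) (hκo : κo = κ.ord)
    (he : ∀ a b, T.lt a.1 b.1 ↔ U.lt (e a).1 (e b).1)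
    {x1 x2 : α} (hx1 : T.ht x1 ∈ A ∪ limPts A κo) (hx2 : T.ht x2 ∈ A ∪ limPts A κo)
    (h : T.lt x1 x2) :
    U.lt (gfun T U A κo e hEX x1 hx1) (gfun T U A κo e hEX x2 hx2) := by
  by_cases h1 : T.ht x1 ∈ A
  · have hg : gfun T U A κo e hEX x1 hx1 = (e ⟨x1, h1⟩).1 := gfun_pos hx1 h1
    rw [hg]
    exact (gfun_rel he x2 hx2).2 x1 h h1
  · have hx1' : T.ht x1 ∈ limPts A κo := hx1.resolve_left h1
    have hlt2 : T.ht x1 < U.ht (gfun T U A κo e hEX x2 hx2) := by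
      rw [gfun_ht he]; exact ht_lt T h
    obtain ⟨w, hw, hwht⟩ := exists_pred U hlt2
    have hrw : TRel T U A e x1 w :=
      ⟨hwht, fun p hp hpA => lt_of_ht_lt U ((gfun_rel he x2 hx2).2 p (T.trans hp h) hpA) hw
        (by rw [ht_e e he, hwht]; exact ht_lt T hp)⟩
    rw [rel_unique hUn he (hκo ▸ hx1') (gfun_rel he x1 hx1) hrw]
    exact hw

lemma he_symm (he : ∀ a b, T.lt a.1 b.1 ↔ U.lt (e a).1 (e b).1) :
    ∀ a b : {y : β // U.ht y ∈ A}, U.lt a.1 b.1 ↔ T.lt (e.symm a).1 (e.symm b).1 := by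
  intro a b
  conv_lhs => rw [← e.apply_symm_apply a, ← e.apply_symm_apply b]
  exact (he _ _).symm

lemma gfun_left_inv (hUn : U.IsNormalTree κ) (hTn : T.IsNormalTree κ) (hκo : κo = κ.ord)
    (he : ∀ a b, T.lt a.1 b.1 ↔ U.lt (e a).1 (e b).1)
    (hEX' : ∀ y, U.ht y ∈ limPts A κo → U.ht y ∉ A → ∃ x, TRel U T A e.symm y x)
    (x : α) (hx : T.ht x ∈ A ∪ limPts A κo)
    (hx2 : U.ht (gfun T U A κo e hEX x hx) ∈ A ∪ limPts A κo) :
    gfun U T A κo e.symm hEX' (gfun T U A κo e hEX x hx) hx2 = x := by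
  by_cases h : T.ht x ∈ A
  · have h1 : gfun T U A κo e hEX x hx = (e ⟨x, h⟩).1 := gfun_pos hx h
    have h2 : U.ht (gfun T U A κo e hEX x hx) ∈ A := by rw [h1]; exact (e ⟨x, h⟩).2
    have h3 : gfun U T A κo e.symm hEX' (gfun T U A κo e hEX x hx) hx2 =
        (e.symm ⟨gfun T U A κo e hEX x hx, h2⟩).1 := gfun_pos hx2 h2
    rw [h3]
    have h4 : (⟨gfun T U A κo e hEX x hx, h2⟩ : {y // U.ht y ∈ A}) = e ⟨x, h⟩ :=
      Subtype.ext h1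
    rw [h4, e.symm_apply_apply]
  · have hxl : T.ht x ∈ limPts A κo := hx.resolve_left h
    have hgl : U.ht (gfun T U A κo e hEX x hx) ∈ limPts A κo := by
      rw [gfun_ht he]; exact hxl
    refine rel_unique hTn (he_symm he) (hκo ▸ hgl)
      (gfun_rel (he_symm he) (gfun T U A κo e hEX x hx) hx2) ⟨(gfun_ht he x hx).symm, ?_⟩
    intro q hq hqA
    have hβ : U.ht q < T.ht x := by
      have := ht_lt U hq; rwa [gfun_ht he] at this
    obtain ⟨p, hpx, hpβ⟩ := exists_pred T hβ
    have hpA : T.ht p ∈ A := hpβ ▸ hqA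
    have h1 : U.lt (e ⟨p, hpA⟩).1 (gfun T U A κo e hEX x hx) := (gfun_rel he x hx).2 p hpx hpA
    have hq' : (e ⟨p, hpA⟩).1 = q := eq_of_ht_eq U h1 hq (by rw [ht_e e he, hpβ])
    have h5 : (⟨q, hqA⟩ : {y // U.ht y ∈ A}) = e ⟨p, hpA⟩ := Subtype.ext hq'.symm
    rw [h5, e.symm_apply_apply]
    exact hpx

end Aux

theorem statement_1 {α β : Type u} (κ : Cardinal) (hreg : κ.IsRegular)
    (hunc : Cardinal.aleph0 < κ)
    (T : STree α) (U : STree β)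
    (hT : T.IsKTree κ) (hU : U.IsKTree κ)
    (hTn : T.IsNormalTree κ) (hUn : U.IsNormalTree κ)
    (A : Set Ordinal) (hA : A ⊆ Set.Iio κ.ord)
    (hAcof : ∀ γ < κ.ord, ∃ δ ∈ A, γ ≤ δ)
    (e : {x : α // T.ht x ∈ A} ≃ {y : β // U.ht y ∈ A})
    (he : ∀ a b, T.lt a.1 b.1 ↔ U.lt (e a).1 (e b).1) :
    ClubIn (A ∪ limPts A κ.ord) κ.ord ∧
    ∃ g : {x : α // T.ht x ∈ A ∪ limPts A κ.ord} ≃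
          {y : β // U.ht y ∈ A ∪ limPts A κ.ord},
      (∀ a b, T.lt a.1 b.1 ↔ U.lt (g a).1 (g b).1) ∧
      ∀ (x : α) (hx : T.ht x ∈ A),
        (g ⟨x, Set.mem_union_left _ hx⟩).1 = (e ⟨x, hx⟩).1 := by
  constructor
  · refine ⟨?_, ?_, ?_⟩
    · rintro δ (hδ | hδ)
      · exact hA hδ
      · exact hδ.1
    · intro γ hγ
      obtain ⟨δ, hδ, h⟩ := hAcof γ hγ
      exact ⟨δ, Or.inl hδ, h⟩
    · intro δ hδκ hδ0 hcl
      by_cases hδA : δ ∈ A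
      · exact Or.inl hδA
      · refine Or.inr ⟨hδκ, hδ0, fun γ hγ => ?_⟩
        obtain ⟨b, hb, h1, h2⟩ := hcl γ hγ
        rcases hb with hb | hb
        · exact ⟨b, hb, h1, h2⟩
        · obtain ⟨a, haA, h3, h4⟩ := hb.2.2 γ h1
          exact ⟨a, haA, h3, h4.trans h2⟩
  · have hEX : ∀ x, T.ht x ∈ limPts A κ.ord → T.ht x ∉ A → ∃ y, TRel T U A e x y :=
      fun x h1 h2 => rel_exists hTn hA hAcof he h1 h2
    have hEX' : ∀ y, U.ht y ∈ limPts A κ.ord → U.ht y ∉ A → ∃ x, TRel U T A e.symm y x :=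
      fun y h1 h2 => rel_exists hUn hA hAcof (he_symm he) h1 h2
    have hmono : ∀ (x1 x2 : α) (hx1 : T.ht x1 ∈ A ∪ limPts A κ.ord)
        (hx2 : T.ht x2 ∈ A ∪ limPts A κ.ord),
        T.lt x1 x2 ↔ U.lt (gfun T U A κ.ord e hEX x1 hx1) (gfun T U A κ.ord e hEX x2 hx2) := by
      intro x1 x2 hx1 hx2
      constructor
      · exact gfun_mono hUn rfl he hx1 hx2
      · intro h
        have m1 : U.ht (gfun T U A κ.ord e hEX x1 hx1) ∈ A ∪ limPts A κ.ord := by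
          rw [gfun_ht he]; exact hx1
        have m2 : U.ht (gfun T U A κ.ord e hEX x2 hx2) ∈ A ∪ limPts A κ.ord := by
          rw [gfun_ht he]; exact hx2
        have h2 := gfun_mono (hEX := hEX') hTn rfl (he_symm he) m1 m2 h
        rwa [gfun_left_inv (hEX := hEX) hUn hTn rfl he hEX' x1 hx1 m1,
          gfun_left_inv (hEX := hEX) hUn hTn rfl he hEX' x2 hx2 m2] at h2
    refine ⟨⟨fun a => ⟨gfun T U A κ.ord e hEX a.1 a.2, by
        rw [gfun_ht he]; exact a.2⟩,
      fun b => ⟨gfun U T A κ.ord e.symm hEX' b.1 b.2, by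
        rw [gfun_ht (he_symm he)]; exact b.2⟩,
      fun a => Subtype.ext (gfun_left_inv (hEX := hEX) hUn hTn rfl he hEX' a.1 a.2
        (by rw [gfun_ht he]; exact a.2)),
      fun b => Subtype.ext (gfun_left_inv (hEX := hEX') hTn hUn rfl (he_symm he) hEX b.1 b.2
        (by rw [gfun_ht (he_symm he)]; exact b.2))⟩,
      ?_, ?_⟩
    · exact fun a b => hmono a.1 b.1 a.2 b.2
    · intro x hx
      show gfun T U A κ.ord e hEX x (Set.mem_union_left _ hx) = (e ⟨x, hx⟩).1
      exact gfun_pos _ hx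
end

section
/- Let κ be a regular uncountable cardinal and T, U be κ-trees. Suppose C ⊆ κ is club and T↾C and U↾C are isomorphic. Then for every limit point δ of C, level δ of T is closed if and only if level δ of U is closed. -/
universe u

/-- The restricted trees `T ↾ A` and `U ↾ A` are isomorphic. -/
def RestrIso {α β : Type u} (T : STree α) (U : STree β) (A : Set Ordinal) : Prop :=
  ∃ e : {x : α // T.ht x ∈ A} ≃ {y : β // U.ht y ∈ A},
    ∀ a b, T.lt a.1 b.1 ↔ U.lt (e a).1 (e b).1

/-- Level `δ` of `T` is closed: every cofinal branch of `T ↾ δ` has an upper bound. -/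
def LevelClosed {α : Type u} (T : STree α) (δ : Ordinal) : Prop :=
  ∀ b : Set α, (∀ x ∈ b, T.ht x < δ) → T.IsChain b →
    (∀ γ < δ, ∃ x ∈ b, T.ht x = γ) → ∃ z, ∀ x ∈ b, T.lt x z


namespace STree

variable {α β : Type u}

theorem ht_eq_typein (T : STree α) {x : α} (z : {y // T.lt y x}) :
    T.ht z.1 = @Ordinal.typein _ (fun a b : {y // T.lt y x} => T.lt a.1 b.1) (T.wo x) z := by
  letI := T.wo x
  letI := T.wo z.1
  rw [← Ordinal.type_subrel]
  refine Ordinal.type_eq.2 ⟨?_⟩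
  exact { toFun := fun w => ⟨⟨w.1, T.trans w.2 z.2⟩, w.2⟩
          invFun := fun v => ⟨v.1.1, v.2⟩
          left_inv := fun w => rfl
          right_inv := fun v => rfl
          map_rel_iff' := Iff.rfl }

theorem ht_lt_of_lt (T : STree α) {z x : α} (h : T.lt z x) : T.ht z < T.ht x := by
  letI := T.wo x
  rw [ht_eq_typein T ⟨z, h⟩]
  exact Ordinal.typein_lt_type _ _

theorem exists_ht_eq_of_lt (T : STree α) {x : α} {γ : Ordinal} (h : γ < T.ht x) :
    ∃ z, T.lt z x ∧ T.ht z = γ := by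
  letI := T.wo x
  obtain ⟨a, ha⟩ := Ordinal.typein_surj (fun a b : {y // T.lt y x} => T.lt a.1 b.1) h
  exact ⟨a.1, a.2, by rw [ht_eq_typein T a]; exact ha⟩

theorem pred_trichotomy (T : STree α) {z1 z2 x : α} (h1 : T.lt z1 x) (h2 : T.lt z2 x) :
    T.lt z1 z2 ∨ z1 = z2 ∨ T.lt z2 z1 := by
  letI := T.wo x
  rcases trichotomous_of (fun a b : {y // T.lt y x} => T.lt a.1 b.1) ⟨z1, h1⟩ ⟨z2, h2⟩ with h|h|h
  · exact Or.inl h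
  · exact Or.inr (Or.inl (congrArg Subtype.val h))
  · exact Or.inr (Or.inr h)

theorem lt_of_ht_lt (T : STree α) {z1 z2 x : α} (h1 : T.lt z1 x) (h2 : T.lt z2 x)
    (h : T.ht z1 < T.ht z2) : T.lt z1 z2 := by
  rcases T.pred_trichotomy h1 h2 with h'|h'|h'
  · exact h'
  · subst h'; exact absurd h (lt_irrefl _)
  · exact absurd (ht_lt_of_lt T h') (not_lt.2 h.le)

/-- Well-order on predecessors of `x` with height in `C`. -/
noncomputable def woC (T : STree α) (C : Set Ordinal) (x : α) :
    IsWellOrder {z : α // T.lt z x ∧ T.ht z ∈ C} (fun a b => T.lt a.1 b.1) := by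
  letI := T.wo x
  exact RelEmbedding.isWellOrder
    (⟨⟨fun z => (⟨z.1, z.2.1⟩ : {y // T.lt y x}),
      fun a b h => by
        apply Subtype.ext
        exact congrArg (fun v : {y // T.lt y x} => v.1) h⟩, Iff.rfl⟩ :
      (fun a b : {z : α // T.lt z x ∧ T.ht z ∈ C} => T.lt a.1 b.1) ↪r
      (fun a b : {y // T.lt y x} => T.lt a.1 b.1))

/-- Restricted height of `x`: order type of predecessors with height in `C`. -/
noncomputable def rhtC (T : STree α) (C : Set Ordinal) (x : α) : Ordinal :=
  @Ordinal.type {z : α // T.lt z x ∧ T.ht z ∈ C} (fun a b => T.lt a.1 b.1) (T.woC C x)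

theorem rhtC_eq (T : STree α) (C : Set Ordinal) (x : α) :
    Ordinal.lift.{u+1} (T.rhtC C x) = Ordinal.lift.{u+1} (Ordinal.type
      (Subrel ((· < ·) : Ordinal.{u} → Ordinal → Prop) (· ∈ C ∩ Set.Iio (T.ht x)))) := by
  letI := T.woC C x
  refine Ordinal.lift_type_eq.{u, u+1, u+1}.2 ⟨?_⟩
  have hbij : Function.Bijective (fun z : {z : α // T.lt z x ∧ T.ht z ∈ C} =>
      (⟨T.ht z.1, z.2.2, ht_lt_of_lt T z.2.1⟩ : ↥(C ∩ Set.Iio (T.ht x)))) := by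
    constructor
    · rintro ⟨z1, h1, h1C⟩ ⟨z2, h2, h2C⟩ h
      have hh : T.ht z1 = T.ht z2 := congrArg Subtype.val h
      rcases T.pred_trichotomy h1 h2 with h'|h'|h'
      · exact absurd (ht_lt_of_lt T h') (by rw [hh]; exact lt_irrefl _)
      · exact Subtype.ext h'
      · exact absurd (ht_lt_of_lt T h') (by rw [hh]; exact lt_irrefl _)
    · rintro ⟨γ, hγC, hγ⟩
      obtain ⟨z, hz, hzht⟩ := T.exists_ht_eq_of_lt hγ
      exact ⟨⟨z, hz, hzht ▸ hγC⟩, Subtype.ext hzht⟩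
  refine ⟨Equiv.ofBijective _ hbij, ?_⟩
  rintro ⟨z1, h1, h1C⟩ ⟨z2, h2, h2C⟩
  show T.ht z1 < T.ht z2 ↔ T.lt z1 z2
  exact ⟨fun h => T.lt_of_ht_lt h1 h2 h, fun h => ht_lt_of_lt T h⟩

theorem comparable_of_le (T : STree α) {x1 x2 w : α} (h1 : T.le x1 w) (h2 : T.le x2 w) :
    T.le x1 x2 ∨ T.le x2 x1 := by
  rcases h1 with h1 | rfl
  · rcases h2 with h2 | rfl
    · rcases T.pred_trichotomy h1 h2 with h|h|h
      · exact Or.inl (Or.inl h)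
      · exact Or.inl (Or.inr h)
      · exact Or.inr (Or.inl h)
    · exact Or.inl (Or.inl h1)
  · exact Or.inr h2

theorem le_trans' (T : STree α) {x y z : α} (h1 : T.le x y) (h2 : T.le y z) : T.le x z := by
  rcases h1 with h1 | rfl
  · rcases h2 with h2 | rfl
    · exact Or.inl (T.trans h1 h2)
    · exact Or.inl h1
  · exact h2

theorem ht_le_of_le (T : STree α) {x y : α} (h : T.le x y) : T.ht x ≤ T.ht y := by
  rcases h with h | rfl
  · exact (ht_lt_of_lt T h).le
  · exact le_rfl

end STree

/-- Strict monotonicity of `γ ↦ type (C ∩ Iio γ)` on `C`. -/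
theorem subrel_inter_lt {C : Set Ordinal} {γ1 γ2 : Ordinal} (h1 : γ1 ∈ C) (h : γ1 < γ2) :
    Ordinal.type (Subrel ((· < ·) : Ordinal → Ordinal → Prop) (· ∈ C ∩ Set.Iio γ1)) <
    Ordinal.type (Subrel ((· < ·) : Ordinal → Ordinal → Prop) (· ∈ C ∩ Set.Iio γ2)) := by
  have key : Ordinal.type (Subrel ((· < ·) : Ordinal → Ordinal → Prop) (· ∈ C ∩ Set.Iio γ1)) =
      Ordinal.typein (Subrel ((· < ·) : Ordinal → Ordinal → Prop) (· ∈ C ∩ Set.Iio γ2))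
        ⟨γ1, h1, h⟩ := by
    rw [← Ordinal.type_subrel]
    refine Ordinal.type_eq.2 ⟨?_⟩
    refine ⟨⟨fun o => ⟨⟨o.1, o.2.1, lt_trans o.2.2 h⟩, o.2.2⟩,
      fun v => ⟨v.1.1, v.1.2.1, v.2⟩, fun o => rfl, fun v => rfl⟩, Iff.rfl⟩
  rw [key]
  exact Ordinal.typein_lt_type _ _

theorem subrel_inter_inj {C : Set Ordinal} {γ1 γ2 : Ordinal} (h1 : γ1 ∈ C) (h2 : γ2 ∈ C)
    (h : Ordinal.type (Subrel ((· < ·) : Ordinal → Ordinal → Prop) (· ∈ C ∩ Set.Iio γ1)) =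
      Ordinal.type (Subrel ((· < ·) : Ordinal → Ordinal → Prop) (· ∈ C ∩ Set.Iio γ2))) :
    γ1 = γ2 := by
  rcases lt_trichotomy γ1 γ2 with h'|h'|h'
  · exact absurd h (ne_of_lt (subrel_inter_lt h1 h'))
  · exact h'
  · exact absurd h.symm (ne_of_lt (subrel_inter_lt h2 h'))

section MainAux
variable {α β : Type u}

theorem ht_image (T : STree α) (U : STree β) {C : Set Ordinal}
    (e : {x : α // T.ht x ∈ C} ≃ {y : β // U.ht y ∈ C})
    (he : ∀ a b, T.lt a.1 b.1 ↔ U.lt (e a).1 (e b).1)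
    (x : {x : α // T.ht x ∈ C}) : U.ht (e x).1 = T.ht x.1 := by
  have hrht : T.rhtC C x.1 = U.rhtC C (e x).1 := by
    letI := T.woC C x.1
    letI := U.woC C (e x).1
    refine Ordinal.type_eq.2 ⟨?_⟩
    refine ⟨⟨fun z => ⟨(e ⟨z.1, z.2.2⟩).1, (he ⟨z.1, z.2.2⟩ x).1 z.2.1, (e ⟨z.1, z.2.2⟩).2⟩,
      fun w => ⟨(e.symm ⟨w.1, w.2.2⟩).1, ?_, (e.symm ⟨w.1, w.2.2⟩).2⟩, ?_, ?_⟩, ?_⟩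
    · have h := he (e.symm ⟨w.1, w.2.2⟩) x
      rw [e.apply_symm_apply] at h
      exact h.2 w.2.1
    · intro z
      apply Subtype.ext
      show (e.symm ⟨(e ⟨z.1, z.2.2⟩).1, (e ⟨z.1, z.2.2⟩).2⟩).1 = z.1
      simp
    · intro w
      apply Subtype.ext
      show (e ⟨(e.symm ⟨w.1, w.2.2⟩).1, (e.symm ⟨w.1, w.2.2⟩).2⟩).1 = w.1
      simp
    · intro a b
      exact (he ⟨a.1, a.2.2⟩ ⟨b.1, b.2.2⟩).symm
  have h1 := T.rhtC_eq C x.1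
  have h2 := U.rhtC_eq C (e x).1
  rw [hrht] at h1
  have h3 : Ordinal.type (Subrel ((· < ·) : Ordinal.{u} → Ordinal → Prop)
      (· ∈ C ∩ Set.Iio (T.ht x.1))) = Ordinal.type (Subrel ((· < ·) : Ordinal.{u} → Ordinal → Prop)
      (· ∈ C ∩ Set.Iio (U.ht (e x).1))) :=
    Ordinal.lift_inj.1 (h1.symm.trans h2)
  exact (subrel_inter_inj x.2 (e x).2 h3).symm

theorem levelClosed_transfer (T : STree α) (U : STree β) {C : Set Ordinal}
    (e : {x : α // T.ht x ∈ C} ≃ {y : β // U.ht y ∈ C})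
    (he : ∀ a b, T.lt a.1 b.1 ↔ U.lt (e a).1 (e b).1)
    {δ : Ordinal} (hδC : δ ∈ C)
    (hδlim : ∀ γ < δ, ∃ c ∈ C, γ < c ∧ c < δ)
    (hclosed : LevelClosed T δ) : LevelClosed U δ := by
  have hsymm : ∀ y : {y : β // U.ht y ∈ C}, T.ht (e.symm y).1 = U.ht y.1 := by
    intro y
    have := ht_image T U e he (e.symm y)
    rw [e.apply_symm_apply] at this
    exact this.symm
  have hlt_symm : ∀ y1 y2 : {y : β // U.ht y ∈ C}, U.lt y1.1 y2.1 →
      T.lt (e.symm y1).1 (e.symm y2).1 := by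
    intro y1 y2 h
    have h' := he (e.symm y1) (e.symm y2)
    rw [e.apply_symm_apply, e.apply_symm_apply] at h'
    exact h'.2 h
  intro b hb1 hb2 hb3
  set a : Set α := {x | ∃ y : {y : β // U.ht y ∈ C}, y.1 ∈ b ∧ T.le x (e.symm y).1} with ha
  have ha1 : ∀ x ∈ a, T.ht x < δ := by
    rintro x ⟨y, hyb, hle⟩
    calc T.ht x ≤ T.ht (e.symm y).1 := T.ht_le_of_le hle
    _ = U.ht y.1 := hsymm y
    _ < δ := hb1 y.1 hyb
  have ha2 : T.IsChain a := by
    rintro x1 ⟨y1, hy1, hle1⟩ x2 ⟨y2, hy2, hle2⟩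
    have hcomp : T.le (e.symm y1).1 (e.symm y2).1 ∨ T.le (e.symm y2).1 (e.symm y1).1 := by
      rcases hb2 y1.1 hy1 y2.1 hy2 with h | h
      · rcases h with h | h
        · exact Or.inl (Or.inl (hlt_symm y1 y2 h))
        · exact Or.inl (Or.inr (by rw [Subtype.ext h]))
      · rcases h with h | h
        · exact Or.inr (Or.inl (hlt_symm y2 y1 h))
        · exact Or.inr (Or.inr (by rw [Subtype.ext h]))
    rcases hcomp with h | h
    · exact T.comparable_of_le (T.le_trans' hle1 h) hle2
    · exact T.comparable_of_le hle1 (T.le_trans' hle2 h)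
  have ha3 : ∀ γ < δ, ∃ x ∈ a, T.ht x = γ := by
    intro γ hγ
    obtain ⟨c, hcC, hγc, hcδ⟩ := hδlim γ hγ
    obtain ⟨yc, hycb, hycht⟩ := hb3 c hcδ
    have hycC : U.ht yc ∈ C := hycht ▸ hcC
    have hxc : T.ht (e.symm ⟨yc, hycC⟩).1 = c := by rw [hsymm ⟨yc, hycC⟩]; exact hycht
    obtain ⟨z, hz, hzht⟩ := T.exists_ht_eq_of_lt (x := (e.symm ⟨yc, hycC⟩).1)
      (γ := γ) (by rw [hxc]; exact hγc)
    exact ⟨z, ⟨⟨yc, hycC⟩, hycb, Or.inl hz⟩, hzht⟩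
  obtain ⟨z, hz⟩ := hclosed a ha1 ha2 ha3
  have hδz : δ ≤ T.ht z := by
    by_contra h
    push_neg at h
    obtain ⟨x, hxa, hxht⟩ := ha3 (T.ht z) h
    exact absurd (STree.ht_lt_of_lt T (hz x hxa)) (by rw [hxht]; exact lt_irrefl _)
  obtain ⟨z', hz'ht, hz'⟩ : ∃ z', T.ht z' = δ ∧ ∀ x ∈ a, T.lt x z' := by
    rcases eq_or_lt_of_le hδz with h | h
    · exact ⟨z, h.symm, hz⟩
    · obtain ⟨z', hz'lt, hz'ht⟩ := T.exists_ht_eq_of_lt h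
      refine ⟨z', hz'ht, fun x hx => ?_⟩
      exact T.lt_of_ht_lt (hz x hx) hz'lt (by rw [hz'ht]; exact ha1 x hx)
  have hz'C : T.ht z' ∈ C := hz'ht ▸ hδC
  refine ⟨(e ⟨z', hz'C⟩).1, fun y hy => ?_⟩
  obtain ⟨c, hcC, hγc, hcδ⟩ := hδlim (U.ht y) (hb1 y hy)
  obtain ⟨yc, hycb, hycht⟩ := hb3 c hcδ
  have hycC : U.ht yc ∈ C := hycht ▸ hcC
  have hyyc : U.lt y yc := by
    have hne : U.ht y ≠ U.ht yc := by rw [hycht]; exact ne_of_lt hγc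
    rcases hb2 y hy yc hycb with h | h
    · rcases h with h | h
      · exact h
      · exact absurd (congrArg U.ht h) hne
    · rcases h with h | h
      · exact absurd (STree.ht_lt_of_lt U h) (by rw [hycht]; exact not_lt.2 hγc.le)
      · exact absurd (congrArg U.ht h.symm) hne
  have hxc : (e.symm ⟨yc, hycC⟩).1 ∈ a := ⟨⟨yc, hycC⟩, hycb, Or.inr rfl⟩
  have h1 : T.lt (e.symm ⟨yc, hycC⟩).1 z' := hz' _ hxc
  have h2 := (he (e.symm ⟨yc, hycC⟩) ⟨z', hz'C⟩).1 h1
  rw [e.apply_symm_apply] at h2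
  exact U.trans hyyc h2

end MainAux

theorem statement_2 {α β : Type u} (κ : Cardinal) (hreg : κ.IsRegular)
    (hunc : Cardinal.aleph0 < κ)
    (T : STree α) (U : STree β)
    (hT : T.IsKTree κ) (hU : U.IsKTree κ)
    (C : Set Ordinal) (hC : ClubIn C κ.ord)
    (hiso : RestrIso T U C)
    (δ : Ordinal) (hδ : δ < κ.ord) (hδ0 : δ ≠ 0)
    (hδlim : ∀ γ < δ, ∃ b ∈ C, γ < b ∧ b < δ) :
    LevelClosed T δ ↔ LevelClosed U δ := by
  obtain ⟨e, he⟩ := hiso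
  have hδC : δ ∈ C := hC.2.2 δ hδ hδ0 hδlim
  have he' : ∀ a b : {y : β // U.ht y ∈ C}, U.lt a.1 b.1 ↔ T.lt (e.symm a).1 (e.symm b).1 := by
    intro a b
    have := he (e.symm a) (e.symm b)
    rw [e.apply_symm_apply, e.apply_symm_apply] at this
    exact this.symm
  exact ⟨levelClosed_transfer T U e he hδC hδlim,
    levelClosed_transfer U T e.symm he' hδC hδlim⟩
end

section
/- Let P be a forcing poset and N any set. A condition p ∈ P is strongly (N,P)-generic if and only if for every q ≤ p there exists s ∈ N ∩ P such that every t ≤ s with t ∈ N ∩ P is compatible with q in P. -/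
universe u

section
variable {P : Type u} [Preorder P]

/-- Two conditions are compatible if they have a common lower bound. -/
def Compat (p q : P) : Prop := ∃ r, r ≤ p ∧ r ≤ q

/-- `D` is a dense subset of the suborder `N ∩ P`. -/
def DenseInSub (N D : Set P) : Prop := D ⊆ N ∧ ∀ s ∈ N, ∃ t ∈ D, t ≤ s

/-- `D` is predense below `p`. -/
def PredenseBelow (D : Set P) (p : P) : Prop := ∀ r, r ≤ p → ∃ d ∈ D, Compat r d

/-- `p` is strongly `(N, P)`-generic. -/
def StronglyGeneric (N : Set P) (p : P) : Prop :=
  ∀ D : Set P, DenseInSub N D → PredenseBelow D p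

/-- `*_N(q, s)`: `s ∈ N ∩ P` and every extension of `s` in `N ∩ P` is compatible with `q`. -/
def NStar (N : Set P) (q s : P) : Prop := s ∈ N ∧ ∀ t ∈ N, t ≤ s → Compat q t

end

theorem statement_5 {P : Type u} [Preorder P] [OrderTop P]
    (N : Set P) (p : P) :
    StronglyGeneric N p ↔ ∀ q, q ≤ p → ∃ s, NStar N q s := by
  constructor
  · intro hSG q hq
    by_contra h
    push_neg at h
    have hD : DenseInSub N {s | s ∈ N ∧ ¬ Compat q s} := by
      refine ⟨fun s hs => hs.1, fun s hs => ?_⟩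
      obtain ⟨t, ht, hts, hnc⟩ := by
        have := h s
        simp only [NStar, not_and, not_forall] at this
        exact this hs
      exact ⟨t, ⟨ht, hnc⟩, hts⟩
    obtain ⟨d, ⟨hdN, hnc⟩, r, hrq, hrd⟩ := hSG _ hD q hq
    exact hnc ⟨r, hrq, hrd⟩
  · intro h D hD r hr
    obtain ⟨s, hsN, hs⟩ := h r hr
    obtain ⟨t, htD, hts⟩ := hD.2 s hsN
    exact ⟨t, htD, hs t (hD.1 htD) hts⟩
end

section
/- Let κ be an ineffable cardinal. Then the ineffability ideal on κ — the collection of S ⊆ κ such that for some sequence ⟨A_α : α < κ⟩ with A_α ⊆ α, S contains no stationary subset coherent for the sequence — is a proper ideal on κ containing all nonstationary sets. -/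
universe u

/-- `S` is stationary in `κo`: it meets every club subset of `κo`. -/
def StationaryIn (S : Set Ordinal) (κo : Ordinal) : Prop :=
  ∀ C : Set Ordinal, ClubIn C κo → (S ∩ C).Nonempty

/-- `S` is coherent for the sequence `A`. -/
def Coherent (A : Ordinal → Set Ordinal) (S : Set Ordinal) : Prop :=
  ∀ a ∈ S, ∀ b ∈ S, a < b → A a = A b ∩ Set.Iio a

/-- `κ` is ineffable. -/
def Ineffable (κ : Cardinal) : Prop :=
  ∀ A : Ordinal → Set Ordinal, (∀ a, A a ⊆ Set.Iio a) →
    ∃ B : Set Ordinal, StationaryIn {a | a < κ.ord ∧ B ∩ Set.Iio a = A a} κ.ord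

/-- The ineffability ideal on `κ`. -/
def IneffIdeal (κ : Cardinal) : Set (Set Ordinal) :=
  {S | S ⊆ Set.Iio κ.ord ∧ ∃ A : Ordinal → Set Ordinal, (∀ a, A a ⊆ Set.Iio a) ∧
    ¬ ∃ T : Set Ordinal, T ⊆ S ∧ StationaryIn T κ.ord ∧ Coherent A T}

/-- Every club contains an element strictly above any given point below `κo`. -/
lemma club_exists_gt {C : Set Ordinal} {κo : Ordinal} (hC : ClubIn C κo)
    (hlim : Order.IsSuccLimit κo) {x : Ordinal} (hx : x < κo) :
    ∃ c ∈ C, x < c ∧ c < κo := by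
  obtain ⟨c, hc, hle⟩ := hC.2.1 (Order.succ x) (hlim.succ_lt hx)
  exact ⟨c, hc, lt_of_lt_of_le (Order.lt_succ x) hle, hC.1 hc⟩

/-- Intersection of two clubs is club (when cofinality is uncountable). -/
lemma club_inter {C D : Set Ordinal} {κo : Ordinal} (hlim : Order.IsSuccLimit κo)
    (hcof : Cardinal.aleph0 < κo.cof) (hC : ClubIn C κo) (hD : ClubIn D κo) :
    ClubIn (C ∩ D) κo := by
  have hstep : ∀ x : {x : Ordinal // x < κo}, ∃ d : {x : Ordinal // x < κo},
      d.1 ∈ D ∧ x.1 < d.1 ∧ ∃ c ∈ C, x.1 < c ∧ c < d.1 := by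
    rintro ⟨x, hx⟩
    obtain ⟨c, hcC, hxc, hcκ⟩ := club_exists_gt hC hlim hx
    obtain ⟨d, hdD, hcd, hdκ⟩ := club_exists_gt hD hlim hcκ
    exact ⟨⟨d, hdκ⟩, hdD, hxc.trans hcd, c, hcC, hxc, hcd⟩
  refine ⟨fun x hx => hC.1 hx.1, ?_, ?_⟩
  · intro γ hγ
    set F : {x : Ordinal // x < κo} → {x : Ordinal // x < κo} :=
      fun x => (hstep x).choose with hF
    set f : ℕ → {x : Ordinal // x < κo} := fun n => F^[n] ⟨γ, hγ⟩ with hf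
    have hfsucc : ∀ n, f (n + 1) = F (f n) := fun n => Function.iterate_succ_apply' F n _
    have hmono : ∀ n, (f n).1 < (f (n + 1)).1 := by
      intro n; rw [hfsucc n]; exact (hstep (f n)).choose_spec.2.1
    have hmono' : ∀ m n, m < n → (f m).1 < (f n).1 := by
      intro m n h
      induction n with
      | zero => omega
      | succ k ih =>
        rcases Nat.lt_succ_iff_lt_or_eq.mp h with h' | h'
        · exact (ih h').trans (hmono k)
        · exact h' ▸ hmono m
    set δ : Ordinal := ⨆ n, (f n).1 with hδ
    have hle : ∀ n, (f n).1 ≤ δ := fun n => Ordinal.le_iSup (fun n => (f n).1) n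
    have hltδ : ∀ n, (f n).1 < δ := fun n => lt_of_lt_of_le (hmono n) (hle (n + 1))
    have hδκ : δ < κo := by
      apply Ordinal.iSup_lt_ord_lift (f := fun n => (f n).1)
      · rwa [Cardinal.mk_nat, Cardinal.lift_aleph0]
      · exact fun n => (f n).2
    have hδ0 : δ ≠ 0 := by
      intro h
      exact absurd (hltδ 0) (by simp [h])
    have hlt' : ∀ β < δ, ∃ n, β < (f n).1 := fun β hβ => Ordinal.lt_iSup_iff.mp hβ
    have hδD : δ ∈ D := by
      refine hD.2.2 δ hδκ hδ0 ?_
      intro β hβ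
      obtain ⟨n, hn⟩ := hlt' β hβ
      refine ⟨(f (n + 1)).1, ?_, hn.trans (hmono n), hltδ (n + 1)⟩
      rw [hfsucc n]; exact (hstep (f n)).choose_spec.1
    have hδC : δ ∈ C := by
      refine hC.2.2 δ hδκ hδ0 ?_
      intro β hβ
      obtain ⟨n, hn⟩ := hlt' β hβ
      obtain ⟨c, hcC, h1, h2⟩ := (hstep (f n)).choose_spec.2.2
      refine ⟨c, hcC, hn.trans h1, ?_⟩
      calc c < (f (n + 1)).1 := by rw [hfsucc n]; exact h2
        _ < δ := hltδ (n + 1)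
    exact ⟨δ, ⟨hδC, hδD⟩, le_of_lt (by simpa [hf] using hltδ 0)⟩
  · intro δ hδκ hδ0 hcl
    constructor
    · exact hC.2.2 δ hδκ hδ0 fun γ hγ => by
        obtain ⟨b, hb, h⟩ := hcl γ hγ; exact ⟨b, hb.1, h⟩
    · exact hD.2.2 δ hδκ hδ0 fun γ hγ => by
        obtain ⟨b, hb, h⟩ := hcl γ hγ; exact ⟨b, hb.2, h⟩

theorem statement_11 (κ : Cardinal) (hreg : κ.IsRegular)
    (hunc : Cardinal.aleph0 < κ) (hineff : Ineffable κ) :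
    (∅ ∈ IneffIdeal κ) ∧
    (∀ A ∈ IneffIdeal κ, ∀ B : Set Ordinal, B ⊆ A → B ∈ IneffIdeal κ) ∧
    (∀ A ∈ IneffIdeal κ, ∀ B ∈ IneffIdeal κ, A ∪ B ∈ IneffIdeal κ) ∧
    (Set.Iio κ.ord ∉ IneffIdeal κ) ∧
    (∀ S : Set Ordinal, S ⊆ Set.Iio κ.ord → ¬ StationaryIn S κ.ord →
      S ∈ IneffIdeal κ) := by
  classical
  have hlim : Order.IsSuccLimit κ.ord := Cardinal.isSuccLimit_ord (le_of_lt hunc)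
  have hcof : Cardinal.aleph0 < κ.ord.cof := by rw [hreg.cof_eq]; exact hunc
  -- the trivial club
  have hclub : ClubIn (Set.Iio κ.ord) κ.ord :=
    ⟨subset_rfl, fun γ hγ => ⟨γ, hγ, le_rfl⟩, fun δ hδ _ _ => hδ⟩
  -- last part: nonstationary sets are in the ideal
  have hns : ∀ S : Set Ordinal, S ⊆ Set.Iio κ.ord → ¬ StationaryIn S κ.ord →
      S ∈ IneffIdeal κ := by
    intro S hSsub hSns
    refine ⟨hSsub, fun _ => ∅, fun a => Set.empty_subset _, ?_⟩
    rintro ⟨T, hTS, hTstat, -⟩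
    apply hSns
    intro C hCclub
    obtain ⟨x, hxT, hxC⟩ := hTstat C hCclub
    exact ⟨x, hTS hxT, hxC⟩
  have hempty_ns : ¬ StationaryIn (∅ : Set Ordinal) κ.ord := by
    intro h
    obtain ⟨x, hx, -⟩ := h _ hclub
    exact hx
  refine ⟨hns ∅ (Set.empty_subset _) hempty_ns, ?_, ?_, ?_, hns⟩
  · -- downward closed
    rintro A ⟨hAsub, f, hfsub, hno⟩ B hBA
    refine ⟨hBA.trans hAsub, f, hfsub, ?_⟩
    rintro ⟨T, hTB, hTstat, hTcoh⟩
    exact hno ⟨T, hTB.trans hBA, hTstat, hTcoh⟩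
  · -- union
    rintro S₁ ⟨h1sub, A₁, hA₁sub, hno₁⟩ S₂ ⟨h2sub, A₂, hA₂sub, hno₂⟩
    refine ⟨Set.union_subset h1sub h2sub,
      fun a => if a ∈ S₁ then A₁ a else A₂ a, ?_, ?_⟩
    · intro a
      by_cases h : a ∈ S₁ <;> simp [h, hA₁sub a, hA₂sub a]
    · rintro ⟨T, hTU, hTstat, hTcoh⟩
      by_cases hst : StationaryIn (T ∩ S₁) κ.ord
      · apply hno₁
        refine ⟨T ∩ S₁, Set.inter_subset_right, hst, ?_⟩
        rintro a ⟨haT, haS⟩ b ⟨hbT, hbS⟩ hab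
        have := hTcoh a haT b hbT hab
        simpa [if_pos haS, if_pos hbS] using this
      · apply hno₂
        refine ⟨T \ S₁, ?_, ?_, ?_⟩
        · intro x hx
          rcases hTU hx.1 with h | h
          · exact absurd h hx.2
          · exact h
        · -- T \ S₁ is stationary
          intro C hCclub
          by_contra hne
          rw [Set.not_nonempty_iff_eq_empty] at hne
          apply hst
          intro C' hC'club
          by_contra hne'
          rw [Set.not_nonempty_iff_eq_empty] at hne'
          obtain ⟨x, hxT, hxC', hxC⟩ := hTstat (C' ∩ C) (club_inter hlim hcof hC'club hCclub)
          by_cases hx1 : x ∈ S₁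
          · exact absurd (Set.eq_empty_iff_forall_notMem.mp hne' x) (by
              simp [hxT, hx1, hxC'])
          · exact absurd (Set.eq_empty_iff_forall_notMem.mp hne x) (by
              simp [hxT, hx1, hxC])
        · rintro a ⟨haT, haS⟩ b ⟨hbT, hbS⟩ hab
          have := hTcoh a haT b hbT hab
          simpa [if_neg haS, if_neg hbS] using this
  · -- properness
    rintro ⟨-, A, hAsub, hno⟩
    obtain ⟨B, hBstat⟩ := hineff A hAsub
    apply hno
    refine ⟨{a | a < κ.ord ∧ B ∩ Set.Iio a = A a}, fun a ha => ha.1, hBstat, ?_⟩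
    rintro a ⟨haκ, ha⟩ b ⟨hbκ, hb⟩ hab
    rw [← ha, ← hb, Set.inter_assoc]
    congr 1
    ext x
    simp only [Set.mem_Iio, Set.mem_inter_iff]
    exact ⟨fun h => ⟨h.trans hab, h⟩, fun h => h.2⟩
end

section
/- Assume CH, and let T and U be normal countably closed ω₂-Aronszajn trees all of whose levels have size ω₁. Then the forcing poset P(T,U) is countably closed: every descending ω-sequence of conditions ⟨p_n⟩ has a greatest lower bound, namely (⋃_n A_{p_n}, ⋃_n f_{p_n}). -/
universe u

/-- The continuum hypothesis. -/
def CH : Prop := (2 : Cardinal.{0}) ^ Cardinal.aleph0 = Cardinal.aleph 1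

/-- A pair `(A, F)` as in the forcing `ℙ(T,U)`: a set of ordinals together with the
graph of a partial function from `T` to `U`. -/
structure PPair (α β : Type u) where
  A : Set Ordinal.{u}
  F : Set (α × β)

/-- Ordinals below `ω₂` of cofinality `ω₁`. -/
def cofW1 : Set Ordinal :=
  {γ | γ < (Cardinal.aleph 2).ord ∧ Ordinal.cof γ = Cardinal.aleph 1}

/-- The domain of a graph. -/
def dom' {α β : Type u} (F : Set (α × β)) : Set α := {x | ∃ y, (x, y) ∈ F}

/-- `p = (A, F)` is a condition in the forcing poset `ℙ(T,U)`. -/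
def IsCond {α β : Type u} (T : STree α) (U : STree β) (p : PPair α β) : Prop :=
  p.A.Countable ∧ p.A ⊆ cofW1 ∧
  (∀ q ∈ p.F, ∀ r ∈ p.F, q.1 = r.1 → q.2 = r.2) ∧
  (∀ q ∈ p.F, ∀ r ∈ p.F, q.2 = r.2 → q.1 = r.1) ∧
  (dom' p.F).Countable ∧
  (∀ q ∈ p.F, T.ht q.1 ∈ p.A) ∧
  (∀ q ∈ p.F, ∀ z : α, T.lt z q.1 → T.ht z ∈ p.A → z ∈ dom' p.F) ∧
  (∀ q ∈ p.F, ∀ b ∈ p.A, T.ht q.1 < b → ∃ r ∈ p.F, T.ht r.1 = b ∧ T.lt q.1 r.1) ∧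
  (∀ q ∈ p.F, U.ht q.2 = T.ht q.1) ∧
  (∀ q ∈ p.F, ∀ r ∈ p.F, T.lt q.1 r.1 → U.lt q.2 r.2)

/-- The order on `ℙ(T,U)`: `p ≤ q` iff `p` extends `q` in both coordinates. -/
def CondLe {α β : Type u} (p q : PPair α β) : Prop := q.A ⊆ p.A ∧ q.F ⊆ p.F

/-- A normal countably closed `ω₂`-Aronszajn tree all of whose levels have size `ω₁`. -/
def NiceTree {α : Type u} (T : STree α) : Prop :=
  T.IsKTree (Cardinal.aleph 2) ∧ T.IsNormalTree (Cardinal.aleph 2) ∧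
    T.CClosed ∧ T.Aronszajn (Cardinal.aleph 2) ∧
    ∀ γ < (Cardinal.aleph 2).ord, Cardinal.mk {x // T.ht x = γ} = Cardinal.aleph 1

theorem statement_13 (hCH : CH) {α β : Type u} (T : STree α) (U : STree β)
    (hT : NiceTree T) (hU : NiceTree U)
    (p : ℕ → PPair α β) (hcond : ∀ n, IsCond T U (p n))
    (hdesc : ∀ n, CondLe (p (n + 1)) (p n)) :
    IsCond T U ⟨⋃ n, (p n).A, ⋃ n, (p n).F⟩ ∧
    (∀ m, CondLe (⟨⋃ n, (p n).A, ⋃ n, (p n).F⟩ : PPair α β) (p m)) ∧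
    (∀ q : PPair α β, IsCond T U q → (∀ m, CondLe q (p m)) →
      CondLe q ⟨⋃ n, (p n).A, ⋃ n, (p n).F⟩) := by
  have hmono : ∀ m n, m ≤ n → CondLe (p n) (p m) := by
    intro m n h
    induction h with
    | refl => exact ⟨subset_rfl, subset_rfl⟩
    | @step k h ih =>
        exact ⟨ih.1.trans (hdesc k).1, ih.2.trans (hdesc k).2⟩
  refine ⟨?_, ?_, ?_⟩
  · obtain ⟨-, -, -, -, -, -, -, -, -, -⟩ := hcond 0
    refine ⟨Set.countable_iUnion fun n => (hcond n).1, ?_, ?_, ?_, ?_, ?_, ?_, ?_, ?_, ?_⟩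
    · exact Set.iUnion_subset fun n => (hcond n).2.1
    · rintro q hq r hr h
      obtain ⟨m, hm⟩ := Set.mem_iUnion.1 hq
      obtain ⟨n, hn⟩ := Set.mem_iUnion.1 hr
      exact (hcond (max m n)).2.2.1 q ((hmono m (max m n) (le_max_left _ _)).2 hm)
        r ((hmono n (max m n) (le_max_right _ _)).2 hn) h
    · rintro q hq r hr h
      obtain ⟨m, hm⟩ := Set.mem_iUnion.1 hq
      obtain ⟨n, hn⟩ := Set.mem_iUnion.1 hr
      exact (hcond (max m n)).2.2.2.1 q ((hmono m (max m n) (le_max_left _ _)).2 hm)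
        r ((hmono n (max m n) (le_max_right _ _)).2 hn) h
    · have : dom' (⋃ n, (p n).F) = ⋃ n, dom' (p n).F := by
        ext x
        simp only [dom', Set.mem_iUnion, Set.mem_setOf_eq]
        tauto
      rw [this]
      exact Set.countable_iUnion fun n => (hcond n).2.2.2.2.1
    · rintro q hq
      obtain ⟨m, hm⟩ := Set.mem_iUnion.1 hq
      exact Set.mem_iUnion.2 ⟨m, (hcond m).2.2.2.2.2.1 q hm⟩
    · rintro q hq z hz hht
      obtain ⟨m, hm⟩ := Set.mem_iUnion.1 hq
      obtain ⟨n, hn⟩ := Set.mem_iUnion.1 hht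
      obtain ⟨y, hy⟩ := (hcond (max m n)).2.2.2.2.2.2.1 q
        ((hmono m (max m n) (le_max_left _ _)).2 hm) z hz
        ((hmono n (max m n) (le_max_right _ _)).1 hn)
      exact ⟨y, Set.mem_iUnion.2 ⟨max m n, hy⟩⟩
    · rintro q hq b hb hlt
      obtain ⟨m, hm⟩ := Set.mem_iUnion.1 hq
      obtain ⟨n, hn⟩ := Set.mem_iUnion.1 hb
      obtain ⟨r, hr, h1, h2⟩ := (hcond (max m n)).2.2.2.2.2.2.2.1 q
        ((hmono m (max m n) (le_max_left _ _)).2 hm) b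
        ((hmono n (max m n) (le_max_right _ _)).1 hn) hlt
      exact ⟨r, Set.mem_iUnion.2 ⟨max m n, hr⟩, h1, h2⟩
    · rintro q hq
      obtain ⟨m, hm⟩ := Set.mem_iUnion.1 hq
      exact (hcond m).2.2.2.2.2.2.2.2.1 q hm
    · rintro q hq r hr h
      obtain ⟨m, hm⟩ := Set.mem_iUnion.1 hq
      obtain ⟨n, hn⟩ := Set.mem_iUnion.1 hr
      exact (hcond (max m n)).2.2.2.2.2.2.2.2.2 q ((hmono m (max m n) (le_max_left _ _)).2 hm)
        r ((hmono n (max m n) (le_max_right _ _)).2 hn) h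
  · intro m
    exact ⟨Set.subset_iUnion (fun n => (p n).A) m, Set.subset_iUnion (fun n => (p n).F) m⟩
  · intro q _ hq
    exact ⟨Set.iUnion_subset fun n => (hq n).1, Set.iUnion_subset fun n => (hq n).2⟩
end

section
/- Let P be a forcing poset, N suitable for P, and p a strongly (N,P)-generic condition. If G is a V-generic filter on P with p ∈ G, then H := N ∩ G is a V-generic filter on the suborder N ∩ P. -/
open FirstOrder

universe u

open FirstOrder.Language

namespace Statement18Aux

/-- Semantic content of `pleF`: `∃ q ≤ r` coding the pair `{a, b}` (or rather `{{a},{a,b}}`-style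
via extensionality of `≤`). -/
def sem {M : Type*} [LE M] (r a b : M) : Prop :=
  ∃ q, q ≤ r ∧ ∀ z, z ≤ q ↔
    ((∀ w, w ≤ z ↔ w = a) ∨ (∀ w, w ≤ z ↔ (w = a ∨ w = b)))

/-- A formula over free variables `Fin 4` (0 = rc, 1 = x, 2 = y, 3 = s) at bound-depth `n`,
asserting `sem rc a b`. -/
def pleF {n : ℕ} (a b : Fin 4 ⊕ Fin n) : Language.order.BoundedFormula (Fin 4) n :=
  BoundedFormula.ex <|
    (Term.le (Term.var (Sum.inr (Fin.last n))) (Term.var (Sum.inl 0))) ⊓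
    BoundedFormula.all
      ((Term.le (Term.var (Sum.inr (Fin.last (n+1)))) (Term.var (Sum.inr ((Fin.last n).castSucc)))).iff
        (BoundedFormula.all
          ((Term.le (Term.var (Sum.inr (Fin.last (n+2)))) (Term.var (Sum.inr ((Fin.last (n+1)).castSucc)))).iff
            (Term.bdEqual (Term.var (Sum.inr (Fin.last (n+2)))) (Term.var (Sum.map id (Fin.castAdd 3) a))))
        ⊔ BoundedFormula.all
          ((Term.le (Term.var (Sum.inr (Fin.last (n+2)))) (Term.var (Sum.inr ((Fin.last (n+1)).castSucc)))).iff
            ((Term.bdEqual (Term.var (Sum.inr (Fin.last (n+2)))) (Term.var (Sum.map id (Fin.castAdd 3) a)))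
              ⊔ (Term.bdEqual (Term.var (Sum.inr (Fin.last (n+2)))) (Term.var (Sum.map id (Fin.castAdd 3) b)))))))

lemma elim_snoc3 {M : Type*} {n : ℕ} (v : Fin 4 → M) (xs : Fin n → M) (q z w : M)
    (c : Fin 4 ⊕ Fin n) :
    Sum.elim v (Fin.snoc (Fin.snoc (Fin.snoc xs q) z) w) (Sum.map id (Fin.castAdd 3) c)
      = Sum.elim v xs c := by
  cases c with
  | inl i => rfl
  | inr j =>
    simp only [Sum.map_inr, Sum.elim_inr]
    rw [show (Fin.castAdd 3 j : Fin (n+3)) = ((j.castSucc).castSucc).castSucc from rfl,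
      Fin.snoc_castSucc, Fin.snoc_castSucc, Fin.snoc_castSucc]

lemma realize_pleF {M : Type*} [LE M] [Language.order.Structure M]
    [Language.order.OrderedStructure M] {n : ℕ} (a b : Fin 4 ⊕ Fin n)
    (v : Fin 4 → M) (xs : Fin n → M) :
    (pleF a b).Realize v xs ↔ sem (v 0) (Sum.elim v xs a) (Sum.elim v xs b) := by
  simp only [pleF, sem, BoundedFormula.realize_ex, BoundedFormula.realize_inf,
    BoundedFormula.realize_all, BoundedFormula.realize_iff, BoundedFormula.realize_sup,
    BoundedFormula.realize_bdEqual, Term.realize_le, Term.realize_var, Sum.elim_inr,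
    Sum.elim_inl, Fin.snoc_last, Fin.snoc_castSucc, elim_snoc3]


/-- Incompatibility-with-`v u` clause at depth 1, `t = &0`:
`∃ r (= &1), sem rc r t ∧ sem rc r (v u)`. -/
def compatF (u : Fin 4) : Language.order.BoundedFormula (Fin 4) 1 :=
  BoundedFormula.ex (pleF (Sum.inr 1) (Sum.inr 0) ⊓ pleF (Sum.inr 1) (Sum.inl u))

def body : Language.order.BoundedFormula (Fin 4) 1 :=
  pleF (Sum.inr 0) (Sum.inl 3) ⊓
  ((pleF (Sum.inr 0) (Sum.inl 1) ⊓ pleF (Sum.inr 0) (Sum.inl 2)) ⊔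
    (∼(compatF 1) ⊔ ∼(compatF 2)))

def psi : Language.order.Formula (Fin 4) :=
  BoundedFormula.ex body

lemma realize_body {M : Type*} [LE M] [Language.order.Structure M]
    [Language.order.OrderedStructure M] (v : Fin 4 → M) (xs : Fin 1 → M) :
    body.Realize v xs ↔
      sem (v 0) (xs 0) (v 3) ∧
        ((sem (v 0) (xs 0) (v 1) ∧ sem (v 0) (xs 0) (v 2)) ∨
          ((¬ ∃ r, sem (v 0) r (xs 0) ∧ sem (v 0) r (v 1)) ∨
           (¬ ∃ r, sem (v 0) r (xs 0) ∧ sem (v 0) r (v 2)))) := by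
  have hx : ∀ r : M, (Fin.snoc xs r : Fin 2 → M) 0 = xs 0 := by
    intro r
    rw [show (0 : Fin 2) = (0 : Fin 1).castSucc from rfl, Fin.snoc_castSucc]
  have hr : ∀ r : M, (Fin.snoc xs r : Fin 2 → M) 1 = r := by
    intro r
    rw [show (1 : Fin 2) = Fin.last 1 from rfl, Fin.snoc_last]
  simp only [body, compatF, BoundedFormula.realize_inf, BoundedFormula.realize_sup,
    BoundedFormula.realize_not, BoundedFormula.realize_ex, realize_pleF, Sum.elim_inl,
    Sum.elim_inr, hx, hr]

lemma realize_psi {M : Type*} [LE M] [Language.order.Structure M]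
    [Language.order.OrderedStructure M] (v : Fin 4 → M) :
    psi.Realize v ↔ ∃ t : M,
      sem (v 0) t (v 3) ∧
        ((sem (v 0) t (v 1) ∧ sem (v 0) t (v 2)) ∨
          ((¬ ∃ r, sem (v 0) r t ∧ sem (v 0) r (v 1)) ∨
           (¬ ∃ r, sem (v 0) r t ∧ sem (v 0) r (v 2)))) := by
  rw [psi, Formula.Realize, BoundedFormula.realize_ex]
  constructor
  · rintro ⟨t, ht⟩
    refine ⟨t, ?_⟩
    have := (realize_body v (Fin.snoc default t)).mp ht
    have hs : (Fin.snoc (default : Fin 0 → M) t : Fin 1 → M) 0 = t := by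
      rw [show (0 : Fin 1) = Fin.last 0 from rfl, Fin.snoc_last]
    simpa [Fin.snoc_last, hs] using this
  · rintro ⟨t, ht⟩
    refine ⟨t, (realize_body v (Fin.snoc default t)).mpr ?_⟩
    have hs : (Fin.snoc (default : Fin 0 → M) t : Fin 1 → M) 0 = t := by
      rw [show (0 : Fin 1) = Fin.last 0 from rfl, Fin.snoc_last]
    simpa [Fin.snoc_last, hs] using ht


lemma exists_of_psi {M : Type*} [LE M] [Language.order.Structure M]
    [Language.order.OrderedStructure M]
    (N : Language.order.ElementarySubstructure M) (vN : Fin 4 → N)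
    (h : psi.Realize (((↑) : N → M) ∘ vN)) :
    ∃ t : M, t ∈ N ∧
      sem (vN 0 : M) t (vN 3) ∧
        ((sem (vN 0 : M) t (vN 1) ∧ sem (vN 0 : M) t (vN 2)) ∨
          ((¬ ∃ r : M, sem (vN 0 : M) r t ∧ sem (vN 0 : M) r (vN 1)) ∨
           (¬ ∃ r : M, sem (vN 0 : M) r t ∧ sem (vN 0 : M) r (vN 2)))) := by
  have h1 : psi.Realize vN := by
    have := N.subtype.map_formula psi vN
    rw [ElementarySubstructure.coe_subtype] at this
    exact this.mp h
  rw [psi, Formula.Realize, BoundedFormula.realize_ex] at h1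
  obtain ⟨a, hbody⟩ := h1
  set xs : Fin 1 → N := Fin.snoc default a with hxs
  have h2 : body.toFormula.Realize (Sum.elim vN xs) :=
    (BoundedFormula.realize_toFormula body _).mpr hbody
  have h3 : body.toFormula.Realize (((↑) : N → M) ∘ Sum.elim vN xs) := by
    have := N.subtype.map_formula body.toFormula (Sum.elim vN xs)
    rw [ElementarySubstructure.coe_subtype] at this
    exact this.mpr h2
  have h4 : body.Realize (((↑) : N → M) ∘ vN) (fun i => (xs i : M)) :=
    (BoundedFormula.realize_toFormula body _).mp h3
  have h5 := (realize_body (((↑) : N → M) ∘ vN) (fun i => (xs i : M))).mp h4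
  have hxs0 : (xs 0 : M) = (a : M) := by
    rw [hxs, show (0 : Fin 1) = Fin.last 0 from rfl, Fin.snoc_last]
  refine ⟨(a : M), a.2, ?_⟩
  rw [hxs0] at h5
  exact h5

end Statement18Aux

/-- `H` stands for `H(θ)` with `≤` interpreted as the membership relation `∈`;
`N` is an elementary substructure of `H` (so `N` is suitable for the poset `P`,
which is an element of `N` coded by `pc` and `rc`).  If `p ∈ G` is strongly
`(N,P)`-generic and `G` is a `V`-generic filter on `P`, then `N ∩ G` is a
`V`-generic filter on `N ∩ P`. -/



theorem statement_18 {H : Type u} [LE H] [Language.order.Structure H]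
    [Language.order.OrderedStructure H]
    (hext : ∀ x y : H, (∀ z : H, z ≤ x ↔ z ≤ y) → x = y)
    (N : Language.order.ElementarySubstructure H)
    (Pc : Set H) (ple : H → H → Prop)
    (hrefl : ∀ x ∈ Pc, ple x x)
    (htrans : ∀ x y z : H, ple x y → ple y z → ple x z)
    (top : H) (htop : top ∈ Pc) (htopmax : ∀ x ∈ Pc, ple x top)
    (pair : H → H → H)
    (hpair : ∀ a b z : H, z ≤ pair a b ↔
      ((∀ w : H, w ≤ z ↔ w = a) ∨ (∀ w : H, w ≤ z ↔ (w = a ∨ w = b))))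
    (pc : H) (hpcN : pc ∈ N) (hpcext : ∀ x : H, x ≤ pc ↔ x ∈ Pc)
    (rc : H) (hrcN : rc ∈ N)
    (hrcext : ∀ x y : H, pair x y ≤ rc ↔ (x ∈ Pc ∧ y ∈ Pc ∧ ple x y))
    (p : H) (hp : p ∈ Pc)
    -- `p` is strongly `(N,P)`-generic:
    (hgen : ∀ D : Set H, D ⊆ {x | x ∈ N ∧ x ∈ Pc} →
      (∀ s : H, s ∈ N → s ∈ Pc → ∃ t ∈ D, ple t s) →
      ∀ r ∈ Pc, ple r p → ∃ d ∈ D, ∃ w ∈ Pc, ple w r ∧ ple w d)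
    -- `G` is a `V`-generic filter on `P` with `p ∈ G`:
    (G : Set H) (hGP : G ⊆ Pc)
    (hGup : ∀ x ∈ G, ∀ y ∈ Pc, ple x y → y ∈ G)
    (hGdir : ∀ x ∈ G, ∀ y ∈ G, ∃ z ∈ G, ple z x ∧ ple z y)
    (hGgen : ∀ E : Set H, E ⊆ Pc → (∀ s ∈ Pc, ∃ t ∈ E, ple t s) →
      ∃ t ∈ E, t ∈ G)
    (hpG : p ∈ G) :
    -- `H' := N ∩ G` is a `V`-generic filter on `N ∩ P`:
    (∀ x : H, x ∈ N → x ∈ G → ∀ y : H, y ∈ N → y ∈ Pc → ple x y → y ∈ G) ∧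
    (∀ x : H, x ∈ N → x ∈ G → ∀ y : H, y ∈ N → y ∈ G →
      ∃ z : H, z ∈ N ∧ z ∈ G ∧ ple z x ∧ ple z y) ∧
    (∀ E : Set H, E ⊆ {x | x ∈ N ∧ x ∈ Pc} →
      (∀ s : H, s ∈ N → s ∈ Pc → ∃ t ∈ E, ple t s) →
      ∃ t ∈ E, t ∈ G) := by
  open Statement18Aux in
  -- decode the `sem` predicate
  have hkey : ∀ a b : H, sem rc a b ↔ (a ∈ Pc ∧ b ∈ Pc ∧ ple a b) := by
    intro a b
    constructor
    · rintro ⟨q, hq, hz⟩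
      have hq' : q = pair a b := hext _ _ (fun z => by rw [hz z, ← hpair a b z])
      rw [hq'] at hq
      exact (hrcext a b).mp hq
    · rintro ⟨ha, hb, hab⟩
      exact ⟨pair a b, (hrcext a b).mpr ⟨ha, hb, hab⟩, fun z => hpair a b z⟩
  -- Part 3: genericity of `N ∩ G` over `N ∩ P`
  have part3 : ∀ E : Set H, E ⊆ {x | x ∈ N ∧ x ∈ Pc} →
      (∀ s : H, s ∈ N → s ∈ Pc → ∃ t ∈ E, ple t s) → ∃ t ∈ E, t ∈ G := by
    intro E hEsub hEdense
    set E' : Set H :=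
      {w | w ∈ Pc ∧ ((∃ d ∈ E, ple w d) ∨ ¬ ∃ z ∈ Pc, ple z w ∧ ple z p)} with hE'
    have hE'sub : E' ⊆ Pc := fun w hw => hw.1
    have hE'dense : ∀ s ∈ Pc, ∃ t ∈ E', ple t s := by
      intro s hs
      by_cases hcomp : ∃ z ∈ Pc, ple z s ∧ ple z p
      · obtain ⟨z, hzP, hzs, hzp⟩ := hcomp
        obtain ⟨d, hdE, w, hwP, hwz, hwd⟩ := hgen E hEsub hEdense z hzP hzp
        exact ⟨w, ⟨hwP, Or.inl ⟨d, hdE, hwd⟩⟩, htrans w z s hwz hzs⟩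
      · exact ⟨s, ⟨hs, Or.inr hcomp⟩, hrefl s hs⟩
    obtain ⟨t, ⟨htP, hcase⟩, htG⟩ := hGgen E' hE'sub hE'dense
    rcases hcase with ⟨d, hdE, htd⟩ | hnc
    · exact ⟨d, hdE, hGup t htG d (hEsub hdE).2 htd⟩
    · exfalso
      obtain ⟨z, hzG, hzt, hzp⟩ := hGdir t htG p hpG
      exact hnc ⟨z, hGP hzG, hzt, hzp⟩
  refine ⟨fun x _ hxG y _ hyP hxy => hGup x hxG y hyP hxy, ?_, part3⟩
  -- Part 2: directedness of `N ∩ G`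
  intro x hxN hxG y hyN hyG
  have hxP : x ∈ Pc := hGP hxG
  have hyP : y ∈ Pc := hGP hyG
  set D : Set H := {t | t ∈ N ∧ t ∈ Pc ∧
    ((ple t x ∧ ple t y) ∨ (¬ ∃ r ∈ Pc, ple r t ∧ ple r x) ∨
      (¬ ∃ r ∈ Pc, ple r t ∧ ple r y))} with hD
  have hDsub : D ⊆ {x | x ∈ N ∧ x ∈ Pc} := fun t ht => ⟨ht.1, ht.2.1⟩
  have hDdense : ∀ s : H, s ∈ N → s ∈ Pc → ∃ t ∈ D, ple t s := by
    intro s hsN hsP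
    set vN : Fin 4 → N := ![⟨rc, hrcN⟩, ⟨x, hxN⟩, ⟨y, hyN⟩, ⟨s, hsN⟩] with hvN
    have hv : ((↑) : N → H) ∘ vN = ![rc, x, y, s] := by
      funext i; fin_cases i <;> rfl
    have hH : psi.Realize (((↑) : N → H) ∘ vN) := by
      rw [hv, realize_psi]
      show ∃ t : H, sem rc t s ∧ ((sem rc t x ∧ sem rc t y) ∨
        ((¬ ∃ r : H, sem rc r t ∧ sem rc r x) ∨ (¬ ∃ r : H, sem rc r t ∧ sem rc r y)))
      by_cases h1 : ∃ r ∈ Pc, ple r s ∧ ple r x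
      · obtain ⟨r, hrP, hrs, hrx⟩ := h1
        by_cases h2 : ∃ u ∈ Pc, ple u r ∧ ple u y
        · obtain ⟨u, huP, hur, huy⟩ := h2
          refine ⟨u, (hkey u s).mpr ⟨huP, hsP, htrans u r s hur hrs⟩,
            Or.inl ⟨(hkey u x).mpr ⟨huP, hxP, htrans u r x hur hrx⟩,
              (hkey u y).mpr ⟨huP, hyP, huy⟩⟩⟩
        · refine ⟨r, (hkey r s).mpr ⟨hrP, hsP, hrs⟩, Or.inr (Or.inr ?_)⟩
          rintro ⟨u, hu1, hu2⟩
          obtain ⟨huP, -, hur⟩ := (hkey u r).mp hu1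
          obtain ⟨-, -, huy⟩ := (hkey u y).mp hu2
          exact h2 ⟨u, huP, hur, huy⟩
      · refine ⟨s, (hkey s s).mpr ⟨hsP, hsP, hrefl s hsP⟩, Or.inr (Or.inl ?_)⟩
        rintro ⟨u, hu1, hu2⟩
        obtain ⟨huP, -, hus⟩ := (hkey u s).mp hu1
        obtain ⟨-, -, hux⟩ := (hkey u x).mp hu2
        exact h1 ⟨u, huP, hus, hux⟩
    obtain ⟨t, htN, ht1, ht2⟩ := exists_of_psi N vN hH
    have hv0 : (vN 0 : H) = rc := rfl
    have hv1 : (vN 1 : H) = x := rfl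
    have hv2 : (vN 2 : H) = y := rfl
    have hv3 : (vN 3 : H) = s := rfl
    rw [hv0, hv3] at ht1
    rw [hv0, hv1, hv2] at ht2
    obtain ⟨htP, -, hts⟩ := (hkey t s).mp ht1
    refine ⟨t, ⟨htN, htP, ?_⟩, hts⟩
    rcases ht2 with ⟨ha, hb⟩ | hnc | hnc
    · obtain ⟨-, -, htx⟩ := (hkey t x).mp ha
      obtain ⟨-, -, hty⟩ := (hkey t y).mp hb
      exact Or.inl ⟨htx, hty⟩
    · refine Or.inr (Or.inl ?_)
      rintro ⟨r, hrP, hrt, hrx⟩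
      exact hnc ⟨r, (hkey r t).mpr ⟨hrP, htP, hrt⟩, (hkey r x).mpr ⟨hrP, hxP, hrx⟩⟩
    · refine Or.inr (Or.inr ?_)
      rintro ⟨r, hrP, hrt, hry⟩
      exact hnc ⟨r, (hkey r t).mpr ⟨hrP, htP, hrt⟩, (hkey r y).mpr ⟨hrP, hyP, hry⟩⟩
  obtain ⟨t, ⟨htN, htP, hcase⟩, htG⟩ := part3 D hDsub hDdense
  obtain ⟨z1, hz1G, h1t, h1x⟩ := hGdir t htG x hxG
  obtain ⟨z2, hz2G, h2t, h2y⟩ := hGdir t htG y hyG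
  rcases hcase with ⟨h1, h2⟩ | h | h
  · exact ⟨t, htN, htG, h1, h2⟩
  · exact absurd ⟨z1, hGP hz1G, h1t, h1x⟩ h
  · exact absurd ⟨z2, hGP hz2G, h2t, h2y⟩ h
end
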